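/- For fixed n ≥ 1, the function θ ↦ n(1 - e^θ)² / (e^{nθ²} - 1), defined for θ ≠ 0 (extended by its limit 1 at θ = 0), attains its supremum over R at θ = 1/n, with supremum value n(e^{1/n} - 1). In particular this supremum is strictly greater than 1 for all n. -/

import Mathlib

open Filter Finset

private lemma exp_sqrt_sq_le (x y : ℝ) (hx : 0 ≤ x) (hy : 0 ≤ y) :
    (Real.exp (Real.sqrt (x * y)) - 1) ^ 2 ≤ (Real.exp x - 1) * (Real.exp y - 1) := by
  set s := Real.sqrt (x * y) with hs
  have hsnn : 0 ≤ s := Real.sqrt_nonneg _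
  have hbound : ∀ (z : ℝ), 0 ≤ z → ∀ N : ℕ,
      (∑ k ∈ range N, z ^ (k + 1) / ((Nat.factorial (k+1) : ℝ))) ≤ Real.exp z - 1 := by
    intro z hz N
    have h := Real.sum_le_exp_of_nonneg hz (N + 1)
    rw [Finset.sum_range_succ'] at h
    simp only [pow_zero, Nat.factorial_zero, Nat.cast_one, div_one] at h
    linarith
  have hterm : ∀ (z : ℝ), 0 ≤ z → ∀ k : ℕ, (0:ℝ) ≤ z ^ (k + 1) / ((Nat.factorial (k+1) : ℝ)) := by
    intro z hz k
    positivity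
  have key : ∀ N : ℕ, (∑ k ∈ range N, s ^ (k + 1) / ((Nat.factorial (k+1) : ℝ))) ^ 2
      ≤ (Real.exp x - 1) * (Real.exp y - 1) := by
    intro N
    have cs := Finset.sum_mul_sq_le_sq_mul_sq (range N)
      (fun k => Real.sqrt (x ^ (k + 1) / ((Nat.factorial (k+1) : ℝ))))
      (fun k => Real.sqrt (y ^ (k + 1) / ((Nat.factorial (k+1) : ℝ))))
    have hprod : ∀ k : ℕ,
        Real.sqrt (x ^ (k + 1) / ((Nat.factorial (k+1) : ℝ))) * Real.sqrt (y ^ (k + 1) / ((Nat.factorial (k+1) : ℝ)))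
          = s ^ (k + 1) / ((Nat.factorial (k+1) : ℝ)) := by
      intro k
      rw [← Real.sqrt_mul (hterm x hx k)]
      have : x ^ (k + 1) / ((Nat.factorial (k+1) : ℝ)) * (y ^ (k + 1) / ((Nat.factorial (k+1) : ℝ)))
          = ((x * y) ^ (k + 1)) / (((Nat.factorial (k+1) : ℝ))) ^ 2 := by
        rw [mul_pow]; ring
      have hpow : Real.sqrt ((x * y) ^ (k + 1)) = s ^ (k + 1) := by
        have h1 : (x * y) ^ (k + 1) = (s ^ (k + 1)) ^ 2 := by
          rw [← pow_mul, mul_comm (k+1) 2, pow_mul, hs, Real.sq_sqrt (mul_nonneg hx hy)]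
        rw [h1, Real.sqrt_sq (by positivity)]
      rw [this, Real.sqrt_div' _ (by positivity), Real.sqrt_sq (by positivity), hpow]
    have hsq : ∀ (z : ℝ), 0 ≤ z → ∀ k : ℕ,
        Real.sqrt (z ^ (k + 1) / ((Nat.factorial (k+1) : ℝ))) ^ 2 = z ^ (k + 1) / ((Nat.factorial (k+1) : ℝ)) := by
      intro z hz k
      exact Real.sq_sqrt (hterm z hz k)
    calc (∑ k ∈ range N, s ^ (k + 1) / ((Nat.factorial (k+1) : ℝ))) ^ 2
        = (∑ k ∈ range N, Real.sqrt (x ^ (k + 1) / ((Nat.factorial (k+1) : ℝ)))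
            * Real.sqrt (y ^ (k + 1) / ((Nat.factorial (k+1) : ℝ)))) ^ 2 := by
          congr 1; exact Finset.sum_congr rfl fun k _ => (hprod k).symm
      _ ≤ (∑ k ∈ range N, Real.sqrt (x ^ (k + 1) / ((Nat.factorial (k+1) : ℝ))) ^ 2)
            * (∑ k ∈ range N, Real.sqrt (y ^ (k + 1) / ((Nat.factorial (k+1) : ℝ))) ^ 2) := cs
      _ = (∑ k ∈ range N, x ^ (k + 1) / ((Nat.factorial (k+1) : ℝ)))
            * (∑ k ∈ range N, y ^ (k + 1) / ((Nat.factorial (k+1) : ℝ))) := by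
          rw [Finset.sum_congr rfl fun k _ => hsq x hx k,
            Finset.sum_congr rfl fun k _ => hsq y hy k]
      _ ≤ (Real.exp x - 1) * (Real.exp y - 1) := by
          apply mul_le_mul (hbound x hx N) (hbound y hy N)
            (Finset.sum_nonneg fun k _ => hterm y hy k)
          have := hbound x hx N
          have := Finset.sum_nonneg (fun k (_ : k ∈ range N) => hterm x hx k)
          linarith
  -- limit
  have hsum : HasSum (fun k : ℕ => s ^ k / ((Nat.factorial k : ℝ))) (Real.exp s) := by
    have := NormedSpace.expSeries_div_hasSum_exp s
    rwa [← Real.exp_eq_exp_ℝ] at this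
  have hsum' : HasSum (fun k : ℕ => s ^ (k + 1) / ((Nat.factorial (k+1) : ℝ))) (Real.exp s - 1) := by
    have := (hasSum_nat_add_iff' 1).2 hsum
    simpa using this
  have htend : Tendsto (fun N => (∑ k ∈ range N, s ^ (k + 1) / ((Nat.factorial (k+1) : ℝ))) ^ 2)
      atTop (nhds ((Real.exp s - 1) ^ 2)) :=
    (hsum'.tendsto_sum_nat).pow 2
  exact le_of_tendsto' htend key

/-- In the Gaussian example, the functional `θ ↦ n(1 - e^θ)²/(e^{nθ²} - 1)` (extended by its
limit `1` at `θ = 0`) attains its supremum at `θ = 1/n`, with value `n(e^{1/n} - 1)`, which is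
strictly greater than `1`. -/
theorem gaussian_efficiency_bound (n : ℕ) (hn : 1 ≤ n)
    (H : ℝ → ℝ)
    (hH : ∀ θ : ℝ, θ ≠ 0 →
      H θ = n * (1 - Real.exp θ) ^ 2 / (Real.exp (n * θ ^ 2) - 1))
    (hH0 : H 0 = 1)
    (hlim : Tendsto H (nhdsWithin 0 {(0 : ℝ)}ᶜ) (nhds 1)) :
    (∀ θ : ℝ, H θ ≤ H (1 / n)) ∧
      H (1 / n) = n * (Real.exp (1 / n) - 1) ∧
      1 < n * (Real.exp (1 / n) - 1) := by
  have hn0 : (0:ℝ) < (n:ℝ) := by exact_mod_cast hn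
  have hinv : (0:ℝ) < 1 / (n:ℝ) := by positivity
  have hinvne : (1:ℝ) / (n:ℝ) ≠ 0 := ne_of_gt hinv
  have hlt : 1 < (n:ℝ) * (Real.exp (1 / n) - 1) := by
    have := Real.add_one_lt_exp hinvne
    have h2 : 1 / (n:ℝ) < Real.exp (1 / n) - 1 := by linarith
    calc (1:ℝ) = (n:ℝ) * (1 / n) := by field_simp
      _ < (n:ℝ) * (Real.exp (1 / n) - 1) := by
          exact mul_lt_mul_of_pos_left h2 hn0
  have hval : H (1 / n) = n * (Real.exp (1 / n) - 1) := by
    rw [hH _ hinvne]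
    have h1 : (n:ℝ) * (1 / (n:ℝ)) ^ 2 = 1 / n := by field_simp
    have h2 : Real.exp (1/(n:ℝ)) - 1 ≠ 0 := by
      have := Real.add_one_lt_exp hinvne; intro h; rw [sub_eq_zero] at h; nlinarith
    rw [h1]
    have h3 : (1 - Real.exp (1/(n:ℝ))) ^ 2 = (Real.exp (1/(n:ℝ)) - 1) ^ 2 := by ring
    rw [h3]
    field_simp
  refine ⟨fun θ => ?_, hval, hlt⟩
  rw [hval]
  by_cases hθ : θ = 0
  · rw [hθ, hH0]; linarith
  · rw [hH _ hθ]
    have hθ2 : (0:ℝ) < θ ^ 2 := by positivity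
    have hy : (0:ℝ) < (n:ℝ) * θ ^ 2 := by positivity
    have hden : (0:ℝ) < Real.exp ((n:ℝ) * θ ^ 2) - 1 := by
      have := Real.add_one_lt_exp (ne_of_gt hy); linarith
    rw [div_le_iff₀ hden]
    have hxy : (1 / (n:ℝ)) * ((n:ℝ) * θ ^ 2) = θ ^ 2 := by field_simp
    have hcs := exp_sqrt_sq_le (1 / (n:ℝ)) ((n:ℝ) * θ ^ 2) (le_of_lt hinv) (le_of_lt hy)
    rw [hxy, Real.sqrt_sq_eq_abs] at hcs
    have habs : (1 - Real.exp θ) ^ 2 ≤ (Real.exp |θ| - 1) ^ 2 := by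
      rcases le_or_gt 0 θ with h | h
      · rw [abs_of_nonneg h]; ring_nf; nlinarith []
      · rw [abs_of_neg h]
        have h1 : Real.exp θ < 1 := Real.exp_lt_one_iff.2 h
        have h2 : 1 - Real.exp θ ≤ Real.exp (-θ) - 1 := by
          have ha := Real.add_one_le_exp θ
          have hb := Real.add_one_le_exp (-θ)
          nlinarith [Real.exp_pos θ, Real.exp_pos (-θ)]
        have h3 : 0 ≤ 1 - Real.exp θ := by linarith
        nlinarith
    calc (n:ℝ) * (1 - Real.exp θ) ^ 2
        ≤ (n:ℝ) * ((Real.exp |θ| - 1) ^ 2) := by nlinarith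
      _ ≤ (n:ℝ) * ((Real.exp (1 / n) - 1) * (Real.exp ((n:ℝ) * θ ^ 2) - 1)) := by
          exact mul_le_mul_of_nonneg_left hcs (le_of_lt hn0)
      _ = (n:ℝ) * (Real.exp (1 / n) - 1) * (Real.exp ((n:ℝ) * θ ^ 2) - 1) := by ring
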